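/- Let α > 1, β > 0, τ > 0, N ∈ ℕ with N ≥ 1, h = 1/N, and let v̄ = (v̄_1, …, v̄_N) ∈ ℝ^N with v̄_i ≥ 0 for all i. Then there exists v = (v_1, …, v_N) ∈ ℝ^N with v_i ≥ 0 for all i such that, with cyclic indices (v_0 := v_N, v_{N+1} := v_1), v_i − v̄_i = (ατ/h²)·v_i^{(α−1)/α}·(v_{i+1}^{β/α} − 2v_i^{β/α} + v_{i−1}^{β/α}) for all i = 1, …, N. -/

import Mathlib

open Set Filter Topology Finset

lemma exists_lt_of_deriv_pos_left {f : ℝ → ℝ} {c a l : ℝ}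
    (hf : HasDerivAt f c a) (hc : 0 < c) (hl : l < a) :
    ∃ t ∈ Set.Icc l a, f t < f a := by
  have hs : Tendsto (slope f a) (𝓝[≠] a) (𝓝 c) := hasDerivAt_iff_tendsto_slope.mp hf
  have hs' : Tendsto (slope f a) (𝓝[<] a) (𝓝 c) :=
    hs.mono_left (nhdsWithin_mono _ (fun x hx => ne_of_lt hx))
  have h1 : ∀ᶠ t in 𝓝[<] a, 0 < slope f a t := hs'.eventually (eventually_gt_nhds hc)
  have h2 : ∀ᶠ t in 𝓝[<] a, t ∈ Set.Ioo l a :=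
    eventually_of_mem (Ioo_mem_nhdsLT hl) (fun x hx => hx)
  obtain ⟨t, ht1, ht2⟩ := ((h1.and h2).exists)
  refine ⟨t, ⟨ht2.1.le, ht2.2.le⟩, ?_⟩
  have hta : t - a < 0 := sub_neg.mpr ht2.2
  rw [slope_def_field, div_pos_iff] at ht1
  rcases ht1 with ⟨h, h'⟩ | ⟨h, h'⟩ <;> linarith

lemma exists_lt_of_deriv_neg_right {f : ℝ → ℝ} {c a u : ℝ}
    (hf : HasDerivAt f c a) (hc : c < 0) (hu : a < u) :
    ∃ t ∈ Set.Icc a u, f t < f a := by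
  have hs : Tendsto (slope f a) (𝓝[≠] a) (𝓝 c) := hasDerivAt_iff_tendsto_slope.mp hf
  have hs' : Tendsto (slope f a) (𝓝[>] a) (𝓝 c) :=
    hs.mono_left (nhdsWithin_mono _ (fun x hx => ne_of_gt hx))
  have h1 : ∀ᶠ t in 𝓝[>] a, slope f a t < 0 := hs'.eventually (eventually_lt_nhds hc)
  have h2 : ∀ᶠ t in 𝓝[>] a, t ∈ Set.Ioo a u :=
    eventually_of_mem (Ioo_mem_nhdsGT hu) (fun x hx => hx)
  obtain ⟨t, ht1, ht2⟩ := ((h1.and h2).exists)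
  refine ⟨t, ⟨ht2.1.le, ht2.2.le⟩, ?_⟩
  have hta : 0 < t - a := sub_pos.mpr ht2.1
  rw [slope_def_field, div_neg_iff] at ht1
  rcases ht1 with ⟨h, h'⟩ | ⟨h, h'⟩ <;> linarith

noncomputable def pmeQ (q : ℝ) : ℝ → ℝ := if q = 0 then Real.log else fun v => v ^ q / q

noncomputable def pmeF (p q vb : ℝ) (v : ℝ) : ℝ := v ^ p / p - vb * pmeQ q v

noncomputable def pmeE (N : ℕ) [NeZero N] (p q γ Cc : ℝ) (vbar : Fin N → ℝ) (x : Fin N → ℝ) : ℝ :=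
  (∑ j, pmeF p q (vbar j) (x j)) +
    Cc / (2 * γ) * ∑ j, (x (j + 1) ^ γ - x j ^ γ) ^ 2

lemma hasDerivAt_pmeQ (q t : ℝ) (ht : 0 < t) : HasDerivAt (pmeQ q) (t ^ (q - 1)) t := by
  unfold pmeQ
  rcases eq_or_ne q 0 with hq | hq
  · simp only [hq, if_pos rfl, if_true]
    have := Real.hasDerivAt_log ht.ne'
    convert this using 1
    rw [zero_sub, Real.rpow_neg_one, inv_eq_one_div]
  · simp only [if_neg hq]
    have h1 : HasDerivAt (fun v : ℝ => v ^ q) (q * t ^ (q - 1)) t :=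
      Real.hasDerivAt_rpow_const (Or.inl ht.ne')
    have := h1.div_const q
    refine this.congr_deriv (Eq.symm ?_)
    field_simp

lemma hasDerivAt_pmeF (p q vb t : ℝ) (hp : p ≠ 0) (ht : 0 < t) :
    HasDerivAt (pmeF p q vb) (t ^ (p - 1) - vb * t ^ (q - 1)) t := by
  have h1 : HasDerivAt (fun v : ℝ => v ^ p) (p * t ^ (p - 1)) t :=
    Real.hasDerivAt_rpow_const (Or.inl ht.ne')
  have h2 := (h1.div_const p).sub ((hasDerivAt_pmeQ q t ht).const_mul vb)
  refine h2.congr_deriv (Eq.symm ?_)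
  field_simp

lemma hasDerivAt_pmeE (N : ℕ) [NeZero N] (p q γ Cc : ℝ) (hp : p ≠ 0) (hγ : 0 < γ)
    (vbar x : Fin N → ℝ) (i : Fin N) (ht : 0 < x i) :
    HasDerivAt (fun t => pmeE N p q γ Cc vbar (Function.update x i t))
      ((x i) ^ (p - 1) - vbar i * (x i) ^ (q - 1)
        + Cc * (x i) ^ (γ - 1) *
          (2 * (x i) ^ γ - (x (i + 1)) ^ γ - (x (i - 1)) ^ γ)) (x i) := by
  set t0 := x i with ht0
  set g : ℝ := γ * t0 ^ (γ - 1) with hg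
  -- derivative of each coordinate power
  have hW : ∀ k : Fin N, HasDerivAt (fun t => (Function.update x i t k) ^ γ)
      (if k = i then g else 0) t0 := by
    intro k
    rcases eq_or_ne k i with hk | hk
    · subst hk
      simp only [if_pos rfl, Function.update_self]
      exact Real.hasDerivAt_rpow_const (Or.inl ht.ne')
    · simp only [if_neg hk]
      have : (fun t => (Function.update x i t k) ^ γ) = fun _ => (x k) ^ γ := by
        funext t; rw [Function.update_of_ne hk]
      rw [this]; exact hasDerivAt_const _ _
  -- derivative of the F-sum
  have hA : HasDerivAt (fun t => ∑ j, pmeF p q (vbar j) (Function.update x i t j))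
      (t0 ^ (p - 1) - vbar i * t0 ^ (q - 1)) t0 := by
    have h1 : ∀ j ∈ Finset.univ, HasDerivAt (fun t => pmeF p q (vbar j) (Function.update x i t j))
        (if j = i then t0 ^ (p - 1) - vbar i * t0 ^ (q - 1) else 0) t0 := by
      intro j _
      rcases eq_or_ne j i with hj | hj
      · subst hj
        simp only [if_pos rfl]
        have : (fun t => pmeF p q (vbar j) (Function.update x j t j))
            = pmeF p q (vbar j) := by funext t; rw [Function.update_self]
        rw [this]; exact hasDerivAt_pmeF p q (vbar j) t0 hp ht
      · simp only [if_neg hj]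
        have : (fun t => pmeF p q (vbar j) (Function.update x i t j))
            = fun _ => pmeF p q (vbar j) (x j) := by
          funext t; rw [Function.update_of_ne hj]
        rw [this]; exact hasDerivAt_const _ _
    have := HasDerivAt.fun_sum h1
    simpa using this
  -- derivative of the Dirichlet sum
  have hB : HasDerivAt (fun t => ∑ j : Fin N,
        ((Function.update x i t (j + 1)) ^ γ - (Function.update x i t j) ^ γ) ^ 2)
      (2 * g * (2 * t0 ^ γ - (x (i + 1)) ^ γ - (x (i - 1)) ^ γ)) t0 := by
    have h1 : ∀ j ∈ Finset.univ, HasDerivAt (fun t =>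
          ((Function.update x i t (j + 1)) ^ γ - (Function.update x i t j) ^ γ) ^ 2)
        (2 * ((x (j + 1)) ^ γ - (x j) ^ γ) *
          ((if j + 1 = i then g else 0) - (if j = i then g else 0))) t0 := by
      intro j _
      have h2 := ((hW (j + 1)).sub (hW j)).fun_pow 2
      simp only [Function.update_eq_self, Nat.cast_ofNat, pow_one] at h2
      refine h2.congr_deriv (Eq.symm ?_)
      norm_num [ht0]
    have := HasDerivAt.fun_sum h1
    refine this.congr_deriv (Eq.symm ?_)
    have hsum : ∀ b : Fin N, (∑ j : Fin N, 2 * ((x (j + 1)) ^ γ - (x j) ^ γ) *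
        (if j = b then g else 0)) = 2 * ((x (b + 1)) ^ γ - (x b) ^ γ) * g := by
      intro b
      rw [Finset.sum_congr rfl (fun j _ => by rw [mul_ite, mul_zero]),
        Finset.sum_ite_eq' Finset.univ b]
      simp
    have e1 : (∑ j : Fin N, 2 * ((x (j + 1)) ^ γ - (x j) ^ γ) *
        ((if j + 1 = i then g else 0) - (if j = i then g else 0)))
        = (∑ j : Fin N, 2 * ((x (j + 1)) ^ γ - (x j) ^ γ) * (if j = i - 1 then g else 0))
          - ∑ j : Fin N, 2 * ((x (j + 1)) ^ γ - (x j) ^ γ) * (if j = i then g else 0) := by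
      rw [← Finset.sum_sub_distrib]
      refine Finset.sum_congr rfl fun j _ => ?_
      have : (j + 1 = i) = (j = i - 1) := by
        apply propext
        constructor
        · intro hh; rw [← hh]; simp
        · intro hh; rw [hh]; simp
      simp only [this]
      ring
    rw [e1, hsum, hsum, sub_add_cancel]
    ring
  have := hA.add (hB.const_mul (Cc / (2 * γ)))
  unfold pmeE
  refine this.congr_deriv (Eq.symm ?_)
  field_simp
  ring

/-- Existence of a nonnegative solution to one step of the implicit Euler
finite-difference scheme for the porous-medium equation. -/
theorem implicit_euler_step_exists
    (α β τ : ℝ) (hα : 1 < α) (hβ : 0 < β) (hτ : 0 < τ)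
    (N : ℕ) [NeZero N] (h : ℝ) (hh : h = 1 / N)
    (vbar : Fin N → ℝ) (hvbar : ∀ i, 0 ≤ vbar i) :
    ∃ v : Fin N → ℝ, (∀ i, 0 ≤ v i) ∧
      ∀ i : Fin N,
        v i - vbar i = α * τ / h ^ 2 * v i ^ ((α - 1) / α) *
          (v (i + 1) ^ (β / α) - 2 * v i ^ (β / α) + v (i - 1) ^ (β / α)) := by
  have hα0 : (0:ℝ) < α := lt_trans one_pos hα
  have hN : (0:ℝ) < N := by
    have := Nat.pos_of_ne_zero (NeZero.ne N)
    exact_mod_cast this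
  have hhpos : 0 < h := by rw [hh]; positivity
  set Cc : ℝ := α * τ / h ^ 2 with hCc
  have hC : 0 < Cc := by rw [hCc]; positivity
  set γ : ℝ := β / α with hγdef
  have hγ : 0 < γ := div_pos hβ hα0
  set p : ℝ := (β + 1) / α with hpdef
  have hp : 0 < p := div_pos (by linarith) hα0
  set q : ℝ := p - 1 with hqdef
  set r : ℝ := 2 * γ - q with hrdef
  have hr : 0 < r := by
    rw [hrdef, hqdef, hpdef, hγdef]
    have e : 2 * (β / α) - ((β + 1) / α - 1) = (β - 1 + α) / α := by
      field_simp
      ring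
    rw [e]
    exact div_pos (by linarith) hα0
  -- lower bounds δ
  have hδex : ∀ i : Fin N, ∃ d : ℝ, 0 ≤ d ∧ d ≤ vbar i ∧ (vbar i = 0 → d = 0) ∧
      (0 < vbar i → 0 < d ∧ d + 2 * Cc * d ^ r < vbar i) := by
    intro i
    rcases eq_or_lt_of_le (hvbar i) with hv | hv
    · exact ⟨0, le_rfl, hvbar i, fun _ => rfl, fun h0 => absurd hv.symm h0.ne'⟩
    · have hcont : ContinuousAt (fun d : ℝ => d + 2 * Cc * d ^ r) 0 :=
        continuousAt_id.add (continuousAt_const.mul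
          (Real.continuousAt_rpow_const 0 r (Or.inr hr.le)))
      have hval : (0:ℝ) + 2 * Cc * (0:ℝ) ^ r = 0 := by
        rw [Real.zero_rpow hr.ne']
        ring
      have htend : Tendsto (fun d : ℝ => d + 2 * Cc * d ^ r) (𝓝[>] (0:ℝ)) (𝓝 0) := by
        have := hcont.tendsto
        rw [hval] at this
        exact this.mono_left nhdsWithin_le_nhds
      have h1 : ∀ᶠ d in 𝓝[>] (0:ℝ), d + 2 * Cc * d ^ r < vbar i :=
        htend.eventually (eventually_lt_nhds hv)
      have h2 : ∀ᶠ d in 𝓝[>] (0:ℝ), 0 < d := eventually_mem_nhdsWithin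
      obtain ⟨d, hd1, hd2⟩ := (h1.and h2).exists
      have hdle : d ≤ vbar i := by
        have : 0 ≤ 2 * Cc * d ^ r := by positivity
        linarith
      exact ⟨d, hd2.le, hdle, fun h0 => absurd h0 hv.ne', fun _ => ⟨hd2, hd1⟩⟩
  choose δ hδ0 hδle hδzero hδpos using hδex
  -- upper bound M
  set M : ℝ := 1 + ∑ j, vbar j with hMdef
  have hM : ∀ j, vbar j < M := by
    intro j
    have h1 : vbar j ≤ ∑ j, vbar j :=
      Finset.single_le_sum (fun k _ => hvbar k) (Finset.mem_univ j)
    rw [hMdef]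
    linarith
  have hM0 : 0 < M := lt_of_le_of_lt (hvbar ⟨0, Nat.pos_of_ne_zero (NeZero.ne N)⟩)
    (hM ⟨0, Nat.pos_of_ne_zero (NeZero.ne N)⟩)
  have hδM : ∀ j, δ j < M := fun j => lt_of_le_of_lt (hδle j) (hM j)
  -- the compact set
  set K : Set (Fin N → ℝ) := Set.pi Set.univ (fun j => Icc (δ j) M) with hKdef
  have hKc : IsCompact K := isCompact_univ_pi (fun j => isCompact_Icc)
  have hvbarK : vbar ∈ K := fun j _ => ⟨hδle j, (hM j).le⟩
  have hcontE : ContinuousOn (pmeE N p q γ Cc vbar) K := by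
    unfold pmeE
    apply ContinuousOn.add
    · apply continuousOn_finset_sum
      intro j _
      rcases eq_or_lt_of_le (hvbar j) with hv | hv
      · have e : (fun x : Fin N → ℝ => pmeF p q (vbar j) (x j))
            = fun x => (x j) ^ p / p := by
          funext y
          unfold pmeF
          rw [← hv, zero_mul, sub_zero]
        rw [e]
        exact (((Real.continuous_rpow_const hp.le).comp
          (continuous_apply j)).div_const p).continuousOn
      · intro y hy
        have hyj : 0 < y j := lt_of_lt_of_le (hδpos j hv).1 (hy j (Set.mem_univ j)).1
        apply ContinuousAt.continuousWithinAt
        have hQ : ContinuousAt (pmeQ q) (y j) := by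
          unfold pmeQ
          rcases eq_or_ne q 0 with hq | hq
          · rw [if_pos hq]
            exact Real.continuousAt_log hyj.ne'
          · rw [if_neg hq]
            exact (Real.continuousAt_rpow_const _ _ (Or.inl hyj.ne')).div_const q
        have hP : ContinuousAt (fun v : ℝ => v ^ p / p) (y j) :=
          (Real.continuousAt_rpow_const _ _ (Or.inl hyj.ne')).div_const p
        have : ContinuousAt (pmeF p q (vbar j)) (y j) := by
          unfold pmeF
          exact hP.sub (continuousAt_const.mul hQ)
        exact ContinuousAt.comp (f := fun x : Fin N → ℝ => x j) this
          (continuous_apply j).continuousAt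
    · apply ContinuousOn.mul continuousOn_const
      apply continuousOn_finset_sum
      intro j _
      have c1 : Continuous (fun x : Fin N → ℝ => (x (j + 1)) ^ γ) :=
        (Real.continuous_rpow_const hγ.le).comp (continuous_apply (j + 1))
      have c2 : Continuous (fun x : Fin N → ℝ => (x j) ^ γ) :=
        (Real.continuous_rpow_const hγ.le).comp (continuous_apply j)
      exact ((c1.sub c2).pow 2).continuousOn
  obtain ⟨x, hxK, hmin⟩ := hKc.exists_isMinOn ⟨vbar, hvbarK⟩ hcontE
  have hxδ : ∀ j, δ j ≤ x j := fun j => (hxK j (Set.mem_univ j)).1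
  have hxM : ∀ j, x j ≤ M := fun j => (hxK j (Set.mem_univ j)).2
  have hx0 : ∀ j, 0 ≤ x j := fun j => le_trans (hδ0 j) (hxδ j)
  refine ⟨x, hx0, ?_⟩
  intro i
  have hminφ : ∀ t ∈ Icc (δ i) M,
      pmeE N p q γ Cc vbar x ≤ pmeE N p q γ Cc vbar (Function.update x i t) := by
    intro t ht
    have hupd : Function.update x i t ∈ K := by
      intro j _
      rcases eq_or_ne j i with hj | hj
      · subst hj
        rw [Function.update_self]
        exact ht
      · rw [Function.update_of_ne hj]
        exact ⟨hxδ j, hxM j⟩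
    exact hmin hupd
  rcases eq_or_lt_of_le (hx0 i) with hxi0 | hxi0
  · -- x i = 0, forces vbar i = 0
    have hvi : vbar i = 0 := by
      by_contra hne
      have hv : 0 < vbar i := lt_of_le_of_ne (hvbar i) (Ne.symm hne)
      have h1 := (hδpos i hv).1
      have h2 := hxδ i
      linarith
    have hθ : ((α - 1) / α) ≠ 0 := ne_of_gt (div_pos (by linarith) hα0)
    rw [← hxi0, hvi, Real.zero_rpow hθ]
    ring
  · -- x i > 0
    have hD := hasDerivAt_pmeE N p q γ Cc hp.ne' hγ vbar x i hxi0
    have hA0 : (0:ℝ) ≤ x (i + 1) ^ γ := Real.rpow_nonneg (hx0 _) _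
    have hB0 : (0:ℝ) ≤ x (i - 1) ^ γ := Real.rpow_nonneg (hx0 _) _
    have hnotM : x i ≠ M := by
      intro hMeq
      have hA : x (i + 1) ^ γ ≤ M ^ γ := Real.rpow_le_rpow (hx0 _) (hxM _) hγ.le
      have hB : x (i - 1) ^ γ ≤ M ^ γ := Real.rpow_le_rpow (hx0 _) (hxM _) hγ.le
      have hxγ : x i ^ γ = M ^ γ := by rw [hMeq]
      have e3 : x i ^ (q - 1) * x i = x i ^ (p - 1) := by
        rw [show p - 1 = (q - 1) + 1 by rw [hqdef]; ring]
        rw [Real.rpow_add_one hxi0.ne' (q - 1)]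
      have hq1 : 0 < x i ^ (q - 1) := Real.rpow_pos_of_pos hxi0 _
      have hγ1 : 0 ≤ x i ^ (γ - 1) := Real.rpow_nonneg (hx0 i) _
      have hcpos : 0 < x i ^ (p - 1) - vbar i * x i ^ (q - 1)
          + Cc * x i ^ (γ - 1) *
            (2 * x i ^ γ - x (i + 1) ^ γ - x (i - 1) ^ γ) := by
        have h1 : 0 ≤ Cc * x i ^ (γ - 1) *
            (2 * x i ^ γ - x (i + 1) ^ γ - x (i - 1) ^ γ) := by
          apply mul_nonneg (mul_nonneg hC.le hγ1)
          rw [hxγ]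
          linarith
        have h2 : vbar i < x i := by rw [hMeq]; exact hM i
        have h3 : x i ^ (p - 1) - vbar i * x i ^ (q - 1)
            = x i ^ (q - 1) * (x i - vbar i) := by rw [← e3]; ring
        have h4 : 0 < x i ^ (q - 1) * (x i - vbar i) :=
          mul_pos hq1 (by linarith)
        linarith
      obtain ⟨t, ht, hlt⟩ := exists_lt_of_deriv_pos_left hD hcpos
        (lt_of_lt_of_le (lt_of_le_of_lt (hδle i) (hM i)) (le_of_eq hMeq.symm))
      simp only [Function.update_eq_self] at hlt
      have := hminφ t ⟨ht.1, le_trans ht.2 (le_of_eq hMeq)⟩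
      linarith
    have hnotδ : x i ≠ δ i ∨ True := Or.inr trivial
    rcases eq_or_lt_of_le (hxδ i) with hδeq | hδlt
    · -- x i = δ i > 0 : contradiction
      exfalso
      have hδipos : 0 < δ i := hδeq ▸ hxi0
      have hvi : 0 < vbar i := by
        rcases eq_or_lt_of_le (hvbar i) with hv | hv
        · exact absurd (hδzero i hv.symm) hδipos.ne'
        · exact hv
      obtain ⟨-, hdcond⟩ := hδpos i hvi
      have hd : 0 < x i := hxi0
      have hq1 : 0 < x i ^ (q - 1) := Real.rpow_pos_of_pos hd _
      have hγ1 : 0 ≤ x i ^ (γ - 1) := Real.rpow_nonneg (hx0 i) _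
      have e3 : x i ^ (q - 1) * x i = x i ^ (p - 1) := by
        rw [show p - 1 = (q - 1) + 1 by rw [hqdef]; ring]
        rw [Real.rpow_add_one hd.ne' (q - 1)]
      have e5 : x i ^ (γ - 1) * x i ^ γ = x i ^ (q - 1) * x i ^ r := by
        rw [← Real.rpow_add hd, ← Real.rpow_add hd]
        congr 1
        rw [hrdef]
        ring
      have hrpos : 0 < x i ^ r := Real.rpow_pos_of_pos hd _
      have hcneg : x i ^ (p - 1) - vbar i * x i ^ (q - 1)
          + Cc * x i ^ (γ - 1) *
            (2 * x i ^ γ - x (i + 1) ^ γ - x (i - 1) ^ γ) < 0 := by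
        have h1 : Cc * x i ^ (γ - 1) *
            (2 * x i ^ γ - x (i + 1) ^ γ - x (i - 1) ^ γ)
            ≤ 2 * Cc * (x i ^ (q - 1) * x i ^ r) := by
          rw [← e5]
          have : 2 * x i ^ γ - x (i + 1) ^ γ - x (i - 1) ^ γ ≤ 2 * x i ^ γ := by
            linarith
          nlinarith [mul_nonneg hC.le hγ1]
        have h2 : x i + 2 * Cc * x i ^ r < vbar i := by
          rw [hδeq] at hdcond
          exact hdcond
        have h3 : x i ^ (p - 1) - vbar i * x i ^ (q - 1)
            + 2 * Cc * (x i ^ (q - 1) * x i ^ r)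
            = x i ^ (q - 1) * (x i - vbar i + 2 * Cc * x i ^ r) := by
          rw [← e3]; ring
        have h4 : x i ^ (q - 1) * (x i - vbar i + 2 * Cc * x i ^ r) < 0 :=
          mul_neg_of_pos_of_neg hq1 (by linarith)
        linarith
      obtain ⟨t, ht, hlt⟩ := exists_lt_of_deriv_neg_right hD hcneg
        (lt_of_le_of_ne (hxM i) hnotM)
      simp only [Function.update_eq_self] at hlt
      have := hminφ t ⟨le_trans (le_of_eq hδeq) ht.1, ht.2⟩
      linarith
    · -- interior point: derivative vanishes
      have hnhds : Icc (δ i) M ∈ 𝓝 (x i) :=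
        Icc_mem_nhds hδlt (lt_of_le_of_ne (hxM i) hnotM)
      have hminOn : IsMinOn (fun t => pmeE N p q γ Cc vbar (Function.update x i t))
          (Icc (δ i) M) (x i) := by
        rw [isMinOn_iff]
        intro t ht
        simp only [Function.update_eq_self]
        exact hminφ t ht
      have hc0 := (hminOn.isLocalMin hnhds).hasDerivAt_eq_zero hD
      have hd : 0 < x i := hxi0
      have hq1 : (x i ^ (q - 1)) ≠ 0 := (Real.rpow_pos_of_pos hd _).ne'
      have e3 : x i ^ (q - 1) * x i = x i ^ (p - 1) := by
        rw [show p - 1 = (q - 1) + 1 by rw [hqdef]; ring]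
        rw [Real.rpow_add_one hd.ne' (q - 1)]
      have e4 : x i ^ (q - 1) * x i ^ ((α - 1) / α) = x i ^ (γ - 1) := by
        rw [← Real.rpow_add hd]
        congr 1
        rw [hqdef, hpdef, hγdef]
        field_simp
        ring
      apply mul_left_cancel₀ hq1
      linear_combination e3 + hc0
        + Cc * (2 * x i ^ γ - x (i + 1) ^ γ - x (i - 1) ^ γ) * e4
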